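/- Let R be a principal ideal domain and (M, λ) a non-degenerate symmetric bilinear form on a finitely generated free R-module. A non-degenerate form M is metabolic if and only if its isotropic rank z(M) (the maximal length of an isotropic unimodular sequence) equals rank(M)/2. Moreover z(M) ≤ rank(M)/2 always. -/

import Mathlib

open Module LinearMap Submodule Cardinal

set_option linter.unusedSectionVars false

section Aux

variable {R : Type*} [CommRing R] [IsDomain R] [IsPrincipalIdealRing R]
  {M : Type*} [AddCommGroup M] [Module R M] [Module.Free R M] [Module.Finite R M]
  (B : LinearMap.BilinForm R M)

lemma aux_surj {L q : Submodule R M} (h : IsCompl L q)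
    (hs : Function.Surjective fun v : M => B v) :
    Function.Surjective ((L.subtype.dualMap).comp B) := by
  intro f
  obtain ⟨m, hm⟩ := hs (f ∘ₗ (L.projectionOnto q h))
  refine ⟨m, ?_⟩
  ext y
  have hm' : B m = f ∘ₗ (L.projectionOnto q h) := hm
  simp only [LinearMap.comp_apply, LinearMap.dualMap_apply, hm',
    Submodule.coe_subtype, Submodule.projectionOnto_apply_left h y]

lemma aux_ker_ge {L : Submodule R M} (hL : ∀ x ∈ L, ∀ y ∈ L, B x y = 0) :
    L ≤ LinearMap.ker ((L.subtype.dualMap).comp B) := by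
  intro x hx
  rw [LinearMap.mem_ker]
  ext y
  simpa using hL x hx y y.2

lemma aux_span_zero {k : ℕ} {v : Fin k → M} (hv : ∀ i j, B (v i) (v j) = 0) :
    ∀ x ∈ Submodule.span R (Set.range v), ∀ y ∈ Submodule.span R (Set.range v), B x y = 0 := by
  intro x hx y hy
  induction hx, hy using Submodule.span_induction₂ with
  | mem_mem x y hx hy =>
    obtain ⟨i, rfl⟩ := hx; obtain ⟨j, rfl⟩ := hy; exact hv i j
  | zero_left y hy => simp
  | zero_right x hx => simp
  | add_left x y z hx hy hz h1 h2 => simp [h1, h2]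
  | add_right x y z hx hy hz h1 h2 => simp [h1, h2]
  | smul_left r x y hx hy h1 => simp [h1]
  | smul_right r x y hx hy h1 => simp [h1]

lemma aux_rank {L : Submodule R M} {k : ℕ} (bL : Basis (Fin k) R L)
    (hsurj : Function.Surjective ((L.subtype.dualMap).comp B)) :
    Module.rank R M =
      k + Module.rank R (LinearMap.ker ((L.subtype.dualMap).comp B)) := by
  set φ := (L.subtype.dualMap).comp B with hφ
  have e : (M ⧸ LinearMap.ker φ) ≃ₗ[R] Module.Dual R L :=
    φ.quotKerEquivOfSurjective hsurj
  have bq : Basis (Fin k) R (M ⧸ LinearMap.ker φ) := bL.dualBasis.map e.symm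
  rw [← Submodule.rank_quotient_add_rank (LinearMap.ker φ), rank_eq_card_basis bq]
  simp

lemma aux_ker_eq {L q : Submodule R M} (h : IsCompl L q) {k : ℕ} (bL : Basis (Fin k) R L)
    (hle : L ≤ LinearMap.ker ((L.subtype.dualMap).comp B))
    (hrankK : Module.rank R (LinearMap.ker ((L.subtype.dualMap).comp B)) = k) :
    LinearMap.ker ((L.subtype.dualMap).comp B) = L := by
  set K := LinearMap.ker ((L.subtype.dualMap).comp B) with hK
  have hLrank : Module.rank R L = k := by
    rw [rank_eq_card_basis bL]; simp
  set f : K →ₗ[R] M ⧸ L := L.mkQ.comp K.subtype with hf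
  have hkerf : LinearMap.ker f = L.comap K.subtype := by
    ext x
    simp [hf, Submodule.Quotient.mk_eq_zero]
  have hrk : Module.rank R (LinearMap.range f) + (k : Cardinal) = (k : Cardinal) := by
    have h1 := f.rank_range_add_rank_ker
    rw [hkerf, (Submodule.comapSubtypeEquivOfLe hle).rank_eq, hLrank, hrankK] at h1
    exact h1
  have h0 : Module.rank R (LinearMap.range f) = 0 := by
    have h2 : Module.rank R (LinearMap.range f) + (k : Cardinal) = 0 + (k : Cardinal) := by
      rw [zero_add]; exact hrk
    exact Cardinal.eq_of_add_eq_add_right h2 (nat_lt_aleph0 k)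
  haveI : Module.IsTorsionFree R (M ⧸ L) := by
    set g : (M ⧸ L) →ₗ[R] M := q.subtype.comp (Submodule.quotientEquivOfIsCompl L q h).toLinearMap
    have hg : Function.Injective g :=
      q.injective_subtype.comp (Submodule.quotientEquivOfIsCompl L q h).injective
    exact Function.Injective.moduleIsTorsionFree g hg (map_smul g)
  have hbot : LinearMap.range f = ⊥ := Submodule.rank_eq_zero.mp h0
  refine le_antisymm ?_ hle
  intro x hx
  have hx0 : f ⟨x, hx⟩ = 0 := by
    have hmem : f ⟨x, hx⟩ ∈ LinearMap.range f := LinearMap.mem_range_self f _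
    rwa [hbot, Submodule.mem_bot] at hmem
  simpa [hf, Submodule.Quotient.mk_eq_zero] using hx0

end Aux

/-- An isotropic unimodular sequence: the `v i` form a basis of a free direct summand
of `M` and are pairwise (and self) orthogonal for `B`. -/
def IsoUnimodSeq (R : Type*) [CommRing R] {M : Type*} [AddCommGroup M] [Module R M]
    (B : LinearMap.BilinForm R M) {k : ℕ} (v : Fin k → M) : Prop :=
  LinearIndependent R v ∧
  (∃ q : Submodule R M, IsCompl (Submodule.span R (Set.range v)) q) ∧
  ∀ i j, B (v i) (v j) = 0

/-- A form `B` on `M` is metabolic if it has a Lagrangian `L`: the form vanishes on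
`L`, and the null-composite sequence `0 → L → M ≅ M* → L* → 0` is exact; i.e. the map
`M → L*`, `m ↦ B m |_L`, has kernel exactly `L` and is surjective. -/
def Metabolic (R : Type*) [CommRing R] {M : Type*} [AddCommGroup M] [Module R M]
    (B : LinearMap.BilinForm R M) : Prop :=
  ∃ L : Submodule R M,
    (∀ x ∈ L, ∀ y ∈ L, B x y = 0) ∧
    LinearMap.ker ((L.subtype.dualMap).comp B) = L ∧
    Function.Surjective ((L.subtype.dualMap).comp B)

/-- For a non-degenerate symmetric form over a PID, the isotropic rank
is at most `rank(M)/2` (every isotropic unimodular sequence has length `≤ rank(M)/2`),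
and the form is metabolic iff there is an isotropic unimodular sequence of length
exactly `rank(M)/2`. -/
theorem stmt_17 (R : Type*) [CommRing R] [IsDomain R] [IsPrincipalIdealRing R]
    (M : Type*) [AddCommGroup M] [Module R M] [Module.Free R M] [Module.Finite R M]
    (B : LinearMap.BilinForm R M) (hsymm : B.IsSymm)
    (hnd : Function.Bijective fun v : M => B v) :
    (∀ (k : ℕ) (v : Fin k → M), IsoUnimodSeq R B v → 2 * k ≤ Module.finrank R M) ∧
    (Metabolic R B ↔
      ∃ (k : ℕ) (v : Fin k → M), IsoUnimodSeq R B v ∧ 2 * k = Module.finrank R M) := by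
  constructor
  · -- the bound
    rintro k v ⟨hli, ⟨q, hq⟩, hv⟩
    set L := Submodule.span R (Set.range v) with hL
    have bL : Basis (Fin k) R L := Basis.span hli
    have hsurj := aux_surj B hq hnd.2
    have hle := aux_ker_ge B (aux_span_zero B hv)
    have h1 := aux_rank B bL hsurj
    have hLrank : Module.rank R L = k := by rw [rank_eq_card_basis bL]; simp
    have h2 : (k : Cardinal) + (k : Cardinal) ≤ Module.rank R M := by
      rw [h1]
      exact add_le_add_right (hLrank ▸ Submodule.rank_mono hle) _
    have h3 : ((2 * k : ℕ) : Cardinal) ≤ ((Module.finrank R M : ℕ) : Cardinal) := by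
      rw [Module.finrank_eq_rank]
      refine le_trans ?_ h2
      push_cast
      rw [two_mul]
    exact_mod_cast h3
  constructor
  · -- Metabolic → sequence
    rintro ⟨L, hL0, hker, hsurj⟩
    haveI : Module.Finite R L := inferInstance
    have bL := Module.finBasis R L
    set k := Module.finrank R L with hk
    refine ⟨k, fun i => (bL i : M), ⟨?_, ?_, ?_⟩, ?_⟩
    · exact bL.linearIndependent.map' L.subtype L.ker_subtype
    · -- complement exists
      have hspan : Submodule.span R (Set.range fun i => ((bL i : M))) = L := by
        have h1 : (Set.range fun i => ((bL i : M))) = L.subtype '' Set.range bL := by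
          ext x
          simp [Set.range_comp, Submodule.coe_subtype]
        rw [h1, ← Submodule.map_span, bL.span_eq, Submodule.map_top, Submodule.range_subtype]
      haveI : Module.Free R (Module.Dual R L) := Module.Free.of_basis bL.dualBasis
      obtain ⟨s, hs⟩ := Module.projective_lifting_property ((L.subtype.dualMap).comp B)
        LinearMap.id hsurj
      set φ := (L.subtype.dualMap).comp B with hφ
      have hcompl : IsCompl L (LinearMap.range s) := by
        constructor
        · rw [Submodule.disjoint_def]
          rintro x hxL ⟨y, rfl⟩
          have h1 : φ (s y) = y := by rw [← LinearMap.comp_apply, hs]; rfl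
          have h2 : s y ∈ LinearMap.ker φ := hker.symm ▸ hxL
          rw [LinearMap.mem_ker, h1] at h2
          rw [h2, map_zero]
        · rw [codisjoint_iff_le_sup]
          rintro x -
          have hφs : φ (s (φ x)) = φ x := by rw [← LinearMap.comp_apply, hs]; rfl
          have hmem : x - s (φ x) ∈ L := by
            have hm : x - s (φ x) ∈ LinearMap.ker φ := by
              rw [LinearMap.mem_ker, map_sub, hφs, sub_self]
            rwa [hker] at hm
          have hx := Submodule.add_mem_sup hmem (LinearMap.mem_range_self s (φ x))
          rwa [sub_add_cancel] at hx
      refine ⟨LinearMap.range s, ?_⟩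
      rwa [hspan]
    · exact fun i j => hL0 _ (bL i).2 _ (bL j).2
    · -- the count
      have h1 := aux_rank B bL hsurj
      rw [hker] at h1
      have hLrank : Module.rank R L = k := by rw [rank_eq_card_basis bL]; simp
      have h2 : ((2 * k : ℕ) : Cardinal) = ((Module.finrank R M : ℕ) : Cardinal) := by
        rw [Module.finrank_eq_rank, h1, hLrank]
        push_cast
        ring
      exact_mod_cast h2
  · -- sequence → Metabolic
    rintro ⟨k, v, ⟨hli, ⟨q, hq⟩, hv⟩, h2k⟩
    set L := Submodule.span R (Set.range v) with hL
    have bL : Basis (Fin k) R L := Basis.span hli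
    have hsurj := aux_surj B hq hnd.2
    have hiso := aux_span_zero B hv
    have hle := aux_ker_ge B hiso
    have h1 := aux_rank B bL hsurj
    have hrankM : Module.rank R M = (k : Cardinal) + (k : Cardinal) := by
      rw [← Module.finrank_eq_rank, ← h2k]
      push_cast
      rw [two_mul]
    have hrankK :
        Module.rank R (LinearMap.ker ((L.subtype.dualMap).comp B)) = (k : Cardinal) := by
      have h2 : (k : Cardinal) + Module.rank R (LinearMap.ker ((L.subtype.dualMap).comp B)) =
          (k : Cardinal) + (k : Cardinal) := by rw [← h1, hrankM]
      exact Cardinal.eq_of_add_eq_add_left h2 (nat_lt_aleph0 k)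
    exact ⟨L, hiso, aux_ker_eq B hq bL hle hrankK, hsurj⟩
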